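/- Let U and U' be two order-influencing sets for X under θ. Then U ∩ U' is also an order-influencing set for X under θ. -/

import Mathlib

open Classical in
/-- θ̃_X(h): the sum of θ h x over labels x in X. -/
noncomputable def thetaSum {L : Type*} [Fintype L] (θ : List L → L → ℝ)
    (X : Set L) (h : List L) : ℝ :=
  ∑ x ∈ Finset.univ.filter (· ∈ X), θ h x

open Classical in
/-- The order summary of history h w.r.t. label set U: the list of distinct
labels of U occurring in h, arranged in the order of their last occurrences. -/
noncomputable def orderSummary {L : Type*} [DecidableEq L] (U : Set L)
    (h : List L) : List L :=
  ((h.filter (fun x => decide (x ∈ U))).reverse.dedup).reverse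

/-- U is an order-influencing set for X under θ. -/
def OrderInfluencing {L : Type*} [Fintype L] [DecidableEq L]
    (θ : List L → L → ℝ) (X U : Set L) : Prop :=
  ∀ h h' : List L, orderSummary U h = orderSummary U h' →
    thetaSum θ X h = thetaSum θ X h'

section Aux
open Classical

variable {α : Type*} [DecidableEq α]

lemma aux_union_sub (l₁ l₂ : List α) (h : ∀ x ∈ l₁, x ∈ l₂) : l₁ ∪ l₂ = l₂ := by
  induction l₁ with
  | nil => simp
  | cons a l ih =>
    rw [List.cons_union, ih (fun x hx => h x (List.mem_cons_of_mem a hx))]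
    exact List.insert_of_mem (h a List.mem_cons_self)

lemma aux_union_nodup (l₁ l₂ : List α) (h : l₁.Nodup) :
    l₁ ∪ l₂ = l₁.filter (fun x => decide (x ∉ l₂)) ++ l₂ := by
  induction l₁ with
  | nil => simp
  | cons a l ih =>
    rw [List.nodup_cons] at h
    rw [List.cons_union, ih h.2]
    by_cases ha : a ∈ l₂
    · rw [List.insert_of_mem, List.filter_cons_of_neg (by simpa using ha)]
      simp only [List.mem_append, List.mem_filter]
      exact Or.inr ha
    · rw [List.insert_of_not_mem, List.filter_cons_of_pos (by simpa using ha)]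
      · simp
      · simp only [List.mem_append, List.mem_filter]
        rintro (⟨hl, -⟩ | hl)
        · exact h.1 hl
        · exact ha hl

lemma aux_filter_dedup (l : List α) (p : α → Bool) :
    (l.filter p).dedup = l.dedup.filter p := by
  induction l with
  | nil => simp
  | cons a l ih =>
    by_cases h : a ∈ l
    · rw [List.dedup_cons_of_mem h]
      by_cases hp : p a
      · rw [List.filter_cons_of_pos hp,
          List.dedup_cons_of_mem (List.mem_filter.2 ⟨h, hp⟩), ih]
      · rw [List.filter_cons_of_neg (by simpa using hp), ih]
    · rw [List.dedup_cons_of_notMem h]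
      by_cases hp : p a
      · rw [List.filter_cons_of_pos hp,
          List.dedup_cons_of_notMem (fun hc => h (List.mem_of_mem_filter hc)), ih,
          List.filter_cons_of_pos hp]
      · rw [List.filter_cons_of_neg (by simpa using hp), ih,
          List.filter_cons_of_neg (by simpa using hp)]

lemma mem_orderSummary {V : Set α} {l : List α} {x : α} :
    x ∈ orderSummary V l ↔ x ∈ l ∧ x ∈ V := by
  simp [orderSummary, List.mem_filter]

lemma nodup_orderSummary (V : Set α) (l : List α) : (orderSummary V l).Nodup := by
  simpa [orderSummary] using List.nodup_dedup _

lemma orderSummary_of_nodup {V : Set α} {l : List α} (hl : l.Nodup)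
    (hV : ∀ x ∈ l, x ∈ V) : orderSummary V l = l := by
  unfold orderSummary
  rw [List.filter_eq_self.2 (fun x hx => by simpa using hV x hx),
    List.dedup_eq_self.2 (by simpa using hl), List.reverse_reverse]

lemma orderSummary_inter (V W : Set α) (l : List α) :
    orderSummary (V ∩ W) l
      = (orderSummary V l).filter (fun x => decide (x ∈ W)) := by
  unfold orderSummary
  rw [List.filter_reverse, ← aux_filter_dedup, List.filter_reverse, List.filter_filter]
  congr 3
  refine List.filter_congr fun x _ => ?_
  by_cases hV : x ∈ V <;> by_cases hW : x ∈ W <;> simp [hV, hW, Set.mem_inter_iff]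

lemma orderSummary_append_left (V : Set α) (a c : List α) (ha : a.Nodup)
    (haV : ∀ x ∈ a, x ∈ V) (hc : ∀ x ∈ c, x ∈ V → x ∈ a) :
    orderSummary V (a ++ c) = a := by
  unfold orderSummary
  rw [List.filter_append, List.filter_eq_self.2 (fun x hx => by simpa using haV x hx),
    List.reverse_append, List.dedup_append,
    List.dedup_eq_self.2 (by simpa using ha),
    aux_union_sub _ _ (by
      intro x hx
      simp only [List.mem_reverse, List.mem_filter, decide_eq_true_eq] at hx ⊢
      exact hc x hx.1 hx.2),
    List.reverse_reverse]

lemma orderSummary_append_right (V : Set α) (a b : List α)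
    (ha : (a.filter (fun x => decide (x ∈ V))).Nodup)
    (hb : b.Nodup) (hbV : ∀ x ∈ b, x ∈ V) :
    orderSummary V (a ++ b)
      = a.filter (fun x => decide (x ∈ V))
        ++ b.filter (fun x => decide (x ∉ a.filter (fun y => decide (y ∈ V)))) := by
  have hfb : b.filter (fun x => decide (x ∈ V)) = b :=
    List.filter_eq_self.2 (fun x hx => by simpa using hbV x hx)
  unfold orderSummary
  rw [List.filter_append, hfb, List.reverse_append, List.dedup_append,
    List.dedup_eq_self.2 (by simpa using ha),
    aux_union_nodup _ _ (by simpa using hb), List.reverse_append,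
    List.reverse_reverse, List.filter_reverse, List.reverse_reverse]
  congr 1
  refine List.filter_congr fun x _ => ?_
  simp

end Aux

theorem order_influencing_inter {L : Type*} [Fintype L] [DecidableEq L]
    (θ : List L → L → ℝ)
    (hnn : ∀ (h : List L) (x : L), 0 ≤ θ h x)
    (hsum : ∀ h : List L, ∑ x, θ h x = 1)
    (X U U' : Set L)
    (hU : OrderInfluencing θ X U)
    (hU' : OrderInfluencing θ X U') :
    OrderInfluencing θ X (U ∩ U') := by
  classical
  have key : ∀ g : List L,
      thetaSum θ X g = thetaSum θ X (orderSummary (U ∩ U') g) := by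
    intro g
    set a := orderSummary U g with hadef
    set b := orderSummary U' g with hbdef
    set s := orderSummary (U ∩ U') g with hsdef
    have hsa : s = a.filter (fun x => decide (x ∈ U')) := orderSummary_inter U U' g
    have hsb : s = b.filter (fun x => decide (x ∈ U)) := by
      rw [hsdef, Set.inter_comm]; exact orderSummary_inter U' U g
    have haN : a.Nodup := nodup_orderSummary U g
    have hbN : b.Nodup := nodup_orderSummary U' g
    have haU : ∀ x ∈ a, x ∈ U := fun x hx => (mem_orderSummary.1 hx).2
    have hbU' : ∀ x ∈ b, x ∈ U' := fun x hx => (mem_orderSummary.1 hx).2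
    have hsU : ∀ x ∈ s, x ∈ U := fun x hx => (mem_orderSummary.1 hx).2.1
    have hsU' : ∀ x ∈ s, x ∈ U' := fun x hx => (mem_orderSummary.1 hx).2.2
    have hsN : s.Nodup := nodup_orderSummary _ g
    -- step 1: g → a ++ b under U
    have step1 : thetaSum θ X g = thetaSum θ X (a ++ b) := by
      refine hU g (a ++ b) ?_
      rw [← hadef, orderSummary_append_left U a b haN haU]
      intro x hxb hxU
      have : x ∈ s := by
        rw [hsb]; exact List.mem_filter.2 ⟨hxb, by simpa using hxU⟩
      rw [hsa] at this
      exact List.mem_of_mem_filter this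
    -- step 2: a ++ b → s ++ t under U'
    set t := b.filter (fun x => decide (x ∉ U)) with htdef
    have htU' : ∀ x ∈ t, x ∈ U' := fun x hx => hbU' x (List.mem_of_mem_filter hx)
    have htnU : ∀ x ∈ t, x ∉ U := fun x hx => by
      have := (List.mem_filter.1 hx).2; simpa using this
    have htN : t.Nodup := hbN.filter _
    have hsummab : orderSummary U' (a ++ b) = s ++ t := by
      rw [orderSummary_append_right U' a b (by rw [← hsa]; exact hsN) hbN hbU', ← hsa,
        htdef]
      congr 1
      refine List.filter_congr fun x hx => ?_
      by_cases hxU : x ∈ U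
      · have hxs : x ∈ s := by
          rw [hsb]; exact List.mem_filter.2 ⟨hx, by simpa using hxU⟩
        simp [hxs, hxU]
      · have hxs : x ∉ s := fun hc => hxU (hsU x hc)
        simp [hxs, hxU]
    have hsummst : orderSummary U' (s ++ t) = s ++ t := by
      refine orderSummary_of_nodup ?_ ?_
      · rw [List.nodup_append]
        exact ⟨hsN, htN, fun x hxs y hyt hxy => htnU y hyt (hxy ▸ hsU x hxs)⟩
      · intro x hx
        rcases List.mem_append.1 hx with hx | hx
        · exact hsU' x hx
        · exact htU' x hx
    have step2 : thetaSum θ X (a ++ b) = thetaSum θ X (s ++ t) :=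
      hU' (a ++ b) (s ++ t) (hsummab.trans hsummst.symm)
    -- step 3: s ++ t → s under U
    have step3 : thetaSum θ X (s ++ t) = thetaSum θ X s := by
      refine hU (s ++ t) s ?_
      rw [orderSummary_append_left U s t hsN hsU (fun x hx hxU => absurd hxU (htnU x hx)),
        orderSummary_of_nodup hsN hsU]
    rw [step1, step2, step3]
  intro h h' heq
  rw [key h, key h', heq]
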